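/- arXiv:2210.14001 — 4 statements merged into one kernel-verified Lean document; each statement's English description precedes it below -/
import Mathlib

section
/- Let q₁ and q₂ be non-degenerate quadratic forms over ℚ and p a prime. If q₁ ⊗ ℚ_ℓ ≅ q₂ ⊗ ℚ_ℓ for all primes ℓ ≠ p, then q₁ and q₂ have the same discriminant in ℚ×/(ℚ×)². -/
noncomputable section

instance (q : Nat.Primes) : Fact (Nat.Prime (q : ℕ)) := ⟨q.2⟩

/-- The rational diagonal forms `⟨a i⟩` and `⟨b i⟩` become equivalent over `ℚ_ℓ`. -/
def EquivAt {n : ℕ} (a b : Fin n → ℚ) (q : Nat.Primes) : Prop :=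
  (QuadraticMap.weightedSumSquares ℚ_[(q : ℕ)] fun i => (a i : ℚ_[(q : ℕ)])).Equivalent
    (QuadraticMap.weightedSumSquares ℚ_[(q : ℕ)] fun i => (b i : ℚ_[(q : ℕ)]))

open QuadraticMap

section Aux

lemma aux_toMatrix'_wss {K : Type*} [Field K] [Invertible (2:K)] {n : ℕ} (w : Fin n → K) :
    QuadraticForm.toMatrix' (QuadraticMap.weightedSumSquares K w) = Matrix.diagonal w := by
  ext i j
  rw [QuadraticForm.toMatrix', LinearMap.toMatrix₂'_apply]
  rcases eq_or_ne i j with rfl | hij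
  · simp only [QuadraticMap.associated_apply, weightedSumSquares_apply, Pi.single_apply,
      Pi.add_apply, smul_eq_mul, Matrix.diagonal_apply_eq]
    rw [Finset.sum_eq_single i (fun x _ hx => by simp [hx]) (by simp)]
    simp
    field_simp
    ring
  · simp only [QuadraticMap.associated_apply, weightedSumSquares_apply, Pi.single_apply,
      Pi.add_apply, smul_eq_mul, Matrix.diagonal_apply_ne _ hij]
    have : ∀ x : Fin n, w x * (((if x = i then (1:K) else 0) + if x = j then 1 else 0) *
        (((if x = i then (1:K) else 0) + if x = j then 1 else 0)))
        = (if x = i then w x else 0) + (if x = j then w x else 0) := by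
      intro x
      rcases eq_or_ne x i with rfl | hxi <;> rcases eq_or_ne x j with rfl | hxj <;> simp_all
    rw [Finset.sum_congr rfl fun x _ => this x, Finset.sum_add_distrib,
      Finset.sum_ite_eq', Finset.sum_ite_eq']
    simp

lemma aux_discr_wss {K : Type*} [Field K] [Invertible (2:K)] {n : ℕ} (w : Fin n → K) :
    QuadraticForm.discr' (QuadraticMap.weightedSumSquares K w) = ∏ i, w i := by
  rw [QuadraticForm.discr', aux_toMatrix'_wss, Matrix.det_diagonal]

lemma aux_prod_eq_of_equivalent {K : Type*} [Field K] [Invertible (2:K)] {n : ℕ}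
    (w₁ w₂ : Fin n → K)
    (h : (weightedSumSquares K w₁).Equivalent (weightedSumSquares K w₂)) :
    ∃ c : K, c ≠ 0 ∧ ∏ i, w₁ i = c ^ 2 * ∏ i, w₂ i := by
  obtain ⟨f⟩ := h
  have hQ : weightedSumSquares K w₁
      = (weightedSumSquares K w₂).comp f.toLinearEquiv.toLinearMap := by
    ext x
    simp [QuadraticMap.comp_apply, f.map_app']
  set c := (LinearMap.toMatrix' f.toLinearEquiv.toLinearMap).det with hc
  have hdet : c ≠ 0 := by
    rw [hc, LinearMap.det_toMatrix']
    exact (LinearEquiv.isUnit_det' f.toLinearEquiv).ne_zero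
  refine ⟨c, hdet, ?_⟩
  have hd := QuadraticForm.discr'_comp (Q := weightedSumSquares K w₂) f.toLinearEquiv.toLinearMap
  rw [← hQ, aux_discr_wss, aux_discr_wss] at hd
  rw [hd, ← hc]; ring

lemma aux_isSquare_zmod_of_padic {ℓ : ℕ} [Fact ℓ.Prime] {t : ℤ} (h : ¬ (ℓ:ℤ) ∣ t)
    (hsq : IsSquare ((t : ℚ_[ℓ]))) : IsSquare (t : ZMod ℓ) := by
  obtain ⟨y, hy⟩ := hsq
  have ht1 : ‖(t : ℚ_[ℓ])‖ = 1 :=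
    le_antisymm (Padic.norm_int_le_one t)
      (not_lt.mp (fun hlt => h ((Padic.norm_intCast_lt_one_iff (k := t)).mp hlt)))
  have hy1 : ‖y‖ = 1 := by
    have : ‖y‖ * ‖y‖ = 1 := by rw [← norm_mul, ← hy, ht1]
    nlinarith [norm_nonneg y]
  set Y : ℤ_[ℓ] := ⟨y, le_of_eq hy1⟩ with hY
  have hYt : (t : ℤ_[ℓ]) = Y * Y := by
    apply Subtype.ext
    push_cast [hY]
    exact hy
  have := congrArg (PadicInt.toZMod) hYt
  rw [map_mul, map_intCast] at this
  exact ⟨_, this⟩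

lemma aux_sq_dvd_of_padic {q : ℕ} [hq : Fact q.Prime] {t : ℤ} (ht : t ≠ 0) (hdvd : (q:ℤ) ∣ t)
    (hsq : IsSquare (t : ℚ_[q])) : (q:ℤ)^2 ∣ t := by
  obtain ⟨y, hy⟩ := hsq
  have ht0 : (t : ℚ_[q]) ≠ 0 := by exact_mod_cast Int.cast_ne_zero.mpr ht
  have hy0 : y ≠ 0 := by rintro rfl; simp at hy; exact ht0 (by exact_mod_cast hy)
  have hnorm : ‖(t : ℚ_[q])‖ = (q : ℝ) ^ (-(2 * y.valuation)) := by
    rw [hy, norm_mul, Padic.norm_eq_zpow_neg_valuation hy0, ← zpow_add₀ (by exact_mod_cast hq.1.pos.ne')]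
    ring_nf
  have hq1 : (1 : ℝ) < q := by exact_mod_cast hq.1.one_lt
  have h1 : ‖(t : ℚ_[q])‖ ≤ (q:ℝ) ^ (-(1:ℕ) : ℤ) := by
    rw [Padic.norm_int_le_pow_iff_dvd]
    simpa using hdvd
  rw [hnorm] at h1
  have hval : (1 : ℤ) ≤ 2 * y.valuation := by
    have := (zpow_le_zpow_iff_right₀ hq1).mp h1
    omega
  have h2 : ‖(t : ℚ_[q])‖ ≤ (q:ℝ) ^ (-(2:ℤ)) := by
    rw [hnorm]
    exact zpow_le_zpow_right₀ hq1.le (by omega)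
  have h3 : ((q:ℤ) ^ 2 : ℤ) ∣ t := by
    have := (Padic.norm_int_le_pow_iff_dvd (p := q) t 2).mp (by exact_mod_cast h2)
    exact_mod_cast this
  exact h3

lemma aux_mod_eq_of_zmod {m a ℓ : ℕ} (hm : (ℓ : ZMod m) = ((a : ℕ) : ZMod m)) (ha : a < m) :
    ℓ % m = a := by
  have := (ZMod.natCast_eq_natCast_iff' ℓ a m).mp hm
  rwa [Nat.mod_eq_of_lt ha] at this

/-- choice of an auxiliary prime for `t = -1`. -/
lemma aux_case_neg_one (p : ℕ) :
    ∃ ℓ : ℕ, ℓ.Prime ∧ ℓ ≠ p ∧ ¬ ((ℓ:ℤ) ∣ (-1)) ∧ ¬ IsSquare (((-1 : ℤ) : ZMod ℓ)) := by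
  obtain ⟨ℓ, hgt, hℓ, hmod⟩ :=
    Nat.forall_exists_prime_gt_and_eq_mod (q := 4) (a := 3) (by decide) p
  haveI : Fact ℓ.Prime := ⟨hℓ⟩
  have h4 : ℓ % 4 = 3 := aux_mod_eq_of_zmod (by rw [hmod]; norm_cast) (by norm_num)
  refine ⟨ℓ, hℓ, by omega, ?_, ?_⟩
  · intro hdvd
    have h1 : (ℓ:ℤ) ∣ 1 := (dvd_neg).mp hdvd
    have h2 : ℓ ∣ 1 := by exact_mod_cast h1
    exact hℓ.one_lt.ne' (Nat.dvd_one.mp h2)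
  · push_cast
    rw [ZMod.exists_sq_eq_neg_one_iff]
    simp [h4]

/-- choice of an auxiliary prime for `t = ±2` (when `p = 2`). -/
lemma aux_case_two :
    ∃ ℓ : ℕ, ℓ.Prime ∧ ℓ ≠ 2 ∧ ¬ IsSquare ((2 : ZMod ℓ)) ∧ ¬ IsSquare ((-2 : ZMod ℓ)) := by
  obtain ⟨ℓ, hgt, hℓ, hmod⟩ :=
    Nat.forall_exists_prime_gt_and_eq_mod (q := 8) (a := 5) (by decide) 2
  haveI : Fact ℓ.Prime := ⟨hℓ⟩
  have h8 : ℓ % 8 = 5 := aux_mod_eq_of_zmod (by rw [hmod]; norm_cast) (by norm_num)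
  have hℓ2 : ℓ ≠ 2 := by omega
  refine ⟨ℓ, hℓ, hℓ2, ?_, ?_⟩
  · rw [ZMod.exists_sq_eq_two_iff hℓ2]
    omega
  · rw [ZMod.exists_sq_eq_neg_two_iff hℓ2]
    omega

/-- choice of an auxiliary prime for `t = ±p`, `p` an odd prime. -/
lemma aux_case_odd (p : ℕ) [hp : Fact p.Prime] (hp2 : p ≠ 2) :
    ∃ ℓ : ℕ, ℓ.Prime ∧ ℓ ≠ p ∧ ℓ % 4 = 1 ∧ ¬ IsSquare ((p : ZMod ℓ)) := by
  obtain ⟨r, hr⟩ := FiniteField.exists_nonsquare (F := ZMod p)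
    (by rw [ZMod.ringChar_zmod_n]; exact hp2)
  have hr0 : r ≠ 0 := fun h => hr (h ▸ IsSquare.zero)
  have hcop : Nat.Coprime 4 p := by
    have h2 : Nat.Coprime 2 p :=
      (Nat.Prime.coprime_iff_not_dvd Nat.prime_two).mpr
        (fun hdvd => hp2 ((Nat.prime_dvd_prime_iff_eq Nat.prime_two hp.1).mp hdvd).symm)
    exact Nat.Coprime.pow_left 2 h2
  set e := ZMod.chineseRemainder hcop with he
  set A : ZMod (4 * p) := e.symm (1, r) with hA
  haveI : NeZero (4 * p) := ⟨by have := hp.1.pos; positivity⟩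
  have hAunit : IsUnit A := by
    obtain ⟨u, hu⟩ := hr0.isUnit
    have hpair : IsUnit ((1, r) : ZMod 4 × ZMod p) :=
      ⟨⟨(1, r), (1, ↑u⁻¹), by
          rw [Prod.mk_mul_mk, ← hu, Units.mul_inv]; simp, by
          rw [Prod.mk_mul_mk, ← hu, Units.inv_mul]; simp⟩, rfl⟩
    exact hpair.map e.symm.toRingHom
  obtain ⟨ℓ, hgt, hℓ, hmod⟩ :=
    Nat.forall_exists_prime_gt_and_eq_mod (q := 4 * p) hAunit p
  haveI : Fact ℓ.Prime := ⟨hℓ⟩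
  have hproj : ((ℓ : ZMod 4), (ℓ : ZMod p)) = (1, r) := by
    have h0 : e (ℓ : ZMod (4 * p)) = e A := by rw [hmod]
    rw [hA, RingEquiv.apply_symm_apply, map_natCast] at h0
    exact h0
  have h41 : (ℓ : ZMod 4) = 1 := congrArg Prod.fst hproj
  have hrp : (ℓ : ZMod p) = r := congrArg Prod.snd hproj
  have h4 : ℓ % 4 = 1 := aux_mod_eq_of_zmod (by rw [h41]; norm_cast) (by norm_num)
  refine ⟨ℓ, hℓ, by omega, h4, ?_⟩
  rw [ZMod.exists_sq_eq_prime_iff_of_mod_four_eq_one h4 hp2, hrp]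
  exact hr

/-- A nonzero rational which is a square in `ℚ_ℓ` for all primes `ℓ ≠ p` is a square. -/
lemma aux_rat_isSquare (D : ℚ) (hD : D ≠ 0) (p : ℕ) (hp : p.Prime)
    (h : ∀ (ℓ : ℕ) [Fact ℓ.Prime], ℓ ≠ p → IsSquare ((D : ℚ_[ℓ]))) : IsSquare D := by
  haveI : Fact p.Prime := ⟨hp⟩
  set N : ℤ := D.num * (D.den : ℤ) with hNdef
  have hN : N ≠ 0 := mul_ne_zero (Rat.num_ne_zero.mpr hD) (by exact_mod_cast D.den_nz)
  obtain ⟨t₀, s, hts, hsf₀⟩ := Nat.sq_mul_squarefree N.natAbs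
  obtain ⟨t, hsf, hNt⟩ : ∃ t : ℤ, Squarefree t ∧ N = (s:ℤ)^2 * t := by
    have habs : ((s:ℤ)^2 * (t₀:ℤ) : ℤ) = (N.natAbs : ℤ) := by exact_mod_cast hts
    rcases le_or_gt 0 N with hN0 | hN0
    · exact ⟨(t₀:ℤ), by rwa [← Int.squarefree_natAbs, Int.natAbs_natCast],
        by rw [← Int.natAbs_of_nonneg hN0, ← habs]⟩
    · refine ⟨-(t₀:ℤ), by rwa [← Int.squarefree_natAbs, Int.natAbs_neg, Int.natAbs_natCast], ?_⟩
      have h2 : ((N.natAbs : ℤ)) = -N := Int.ofNat_natAbs_of_nonpos hN0.le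
      linear_combination habs + h2
  have ht0 : t ≠ 0 := by
    intro htz
    rw [htz, mul_zero] at hNt
    exact hN hNt
  have hs0 : (s : ℚ) ≠ 0 := by
    intro hs
    rw [Nat.cast_eq_zero] at hs
    rw [hs] at hNt
    push_cast at hNt
    simp at hNt
    exact hN hNt
  have hden0 : ((D.den : ℚ)) ≠ 0 := by exact_mod_cast D.den_nz
  have hnum : (D.num : ℚ) = D * (D.den : ℚ) := by rw [mul_comm, Rat.den_mul_eq_num]
  have hNQ : (N : ℚ) = D * (D.den : ℚ)^2 := by
    rw [hNdef]; push_cast; rw [hnum]; ring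
  have hkey : D = ((s : ℚ) / (D.den : ℚ))^2 * (t : ℚ) := by
    have h1 : (N : ℚ) = (s:ℚ)^2 * (t:ℚ) := by exact_mod_cast congrArg (fun z : ℤ => (z:ℚ)) hNt
    rw [hNQ] at h1
    field_simp
    linear_combination h1
  have hteq : (t : ℚ) = D * ((D.den : ℚ) / (s : ℚ))^2 := by
    have h1 : ((N:ℤ) : ℚ) = (s:ℚ)^2 * (t:ℚ) := by exact_mod_cast congrArg (fun z : ℤ => (z:ℚ)) hNt
    rw [hNQ] at h1
    field_simp
    linear_combination -h1
  -- transfer squares to `t`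
  have hsqt : ∀ (ℓ : ℕ) [Fact ℓ.Prime], ℓ ≠ p → IsSquare ((t : ℚ_[ℓ])) := by
    intro ℓ _ hℓp
    obtain ⟨c, hc⟩ := h ℓ hℓp
    have hfin : ((t : ℤ) : ℚ_[ℓ]) = ((c * ((((D.den : ℚ) / (s : ℚ)) : ℚ) : ℚ_[ℓ])) *
        (c * ((((D.den : ℚ) / (s : ℚ)) : ℚ) : ℚ_[ℓ]))) := by
      have h2 := congrArg (fun x : ℚ => (x : ℚ_[ℓ])) hteq
      push_cast at h2
      rw [h2, hc]
      push_cast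
      ring
    exact ⟨_, hfin⟩
  -- no prime `q ≠ p` divides `t`
  have hA : ∀ q : ℕ, q.Prime → q ≠ p → ¬ ((q:ℤ) ∣ t) := by
    intro q hq hqp hdvd
    haveI : Fact q.Prime := ⟨hq⟩
    have h2 := aux_sq_dvd_of_padic ht0 hdvd (hsqt q hqp)
    rw [pow_two] at h2
    have h3 := hsf _ h2
    rw [Int.isUnit_iff] at h3
    have := hq.one_lt
    omega
  -- every prime dividing `t.natAbs` is `p`
  have hall : ∀ q : ℕ, q.Prime → q ∣ t.natAbs → q = p := by
    intro q hq hdvd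
    by_contra hqp
    exact hA q hq hqp (Int.natAbs_dvd_natAbs.mp (by simpa using hdvd))
  have hsfn : Squarefree t.natAbs := Int.squarefree_natAbs.mpr hsf
  have hn0 : t.natAbs ≠ 0 := Int.natAbs_ne_zero.mpr ht0
  -- classification
  have hclass : t.natAbs = 1 ∨ t.natAbs = p := by
    rcases eq_or_ne t.natAbs 1 with h1 | h1
    · exact Or.inl h1
    · obtain ⟨q, hq, hqd⟩ := Nat.exists_prime_and_dvd h1
      have hqp := hall q hq hqd
      subst hqp
      obtain ⟨m, hm⟩ := hqd
      right
      rcases eq_or_ne m 1 with rfl | hm1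
      · simpa using hm
      · obtain ⟨r, hrp, hrd⟩ := Nat.exists_prime_and_dvd hm1
        have hrq : r = q := hall r hrp (by rw [hm]; exact Dvd.dvd.mul_left hrd q)
        subst hrq
        exfalso
        have hrr : r * r ∣ t.natAbs := by
          rw [hm]
          exact mul_dvd_mul_left r hrd
        exact hrp.one_lt.ne' (Nat.isUnit_iff.mp (hsfn r hrr))
  -- `t = -1` is impossible
  have h2 : D * (D.den:ℚ)^2 = (s:ℚ)^2 * (t:ℚ) := by
    rw [← hNQ]; exact_mod_cast congrArg (fun z : ℤ => (z:ℚ)) hNt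
  have hsqD : IsSquare D ↔ IsSquare ((t:ℤ) : ℚ) := by
    constructor
    · intro ⟨c, hc⟩
      refine ⟨c * ((D.den:ℚ)/(s:ℚ)), ?_⟩
      field_simp
      linear_combination (D.den:ℚ)^2 * hc - h2
    · intro ⟨c, hc⟩
      refine ⟨c * ((s:ℚ)/(D.den:ℚ)), ?_⟩
      field_simp
      linear_combination h2 + (s:ℚ)^2 * hc
  rcases hclass with h1 | hp'
  · rcases Int.natAbs_eq_iff.mp h1 with rfl | rfl
    · rw [hsqD]; exact ⟨1, by norm_num⟩
    · exfalso
      obtain ⟨ℓ, hℓ, hℓp, hdvd, hsq⟩ := aux_case_neg_one p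
      haveI : Fact ℓ.Prime := ⟨hℓ⟩
      exact hsq (aux_isSquare_zmod_of_padic (by exact_mod_cast hdvd) (hsqt ℓ hℓp))
  · exfalso
    have htp : t = (p:ℤ) ∨ t = -(p:ℤ) := Int.natAbs_eq_iff.mp hp'
    rcases eq_or_ne p 2 with rfl | hp2
    · obtain ⟨ℓ, hℓ, hℓ2, hs2', hsn2⟩ := aux_case_two
      haveI : Fact ℓ.Prime := ⟨hℓ⟩
      have hdvd : ¬ ((ℓ:ℤ) ∣ t) := by
        intro hd
        have hd2 : ℓ ∣ t.natAbs := by simpa using Int.natAbs_dvd_natAbs.mpr hd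
        rw [hp'] at hd2
        exact hℓ2 ((Nat.prime_dvd_prime_iff_eq hℓ Nat.prime_two).mp hd2)
      have hz := aux_isSquare_zmod_of_padic hdvd (hsqt ℓ hℓ2)
      rcases htp with rfl | rfl
      · apply hs2'; simpa using hz
      · apply hsn2; simpa using hz
    · obtain ⟨ℓ, hℓ, hℓp, h4, hnsq⟩ := aux_case_odd p hp2
      haveI : Fact ℓ.Prime := ⟨hℓ⟩
      have hdvd : ¬ ((ℓ:ℤ) ∣ t) := by
        intro hd
        have hd2 : ℓ ∣ t.natAbs := by simpa using Int.natAbs_dvd_natAbs.mpr hd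
        rw [hp'] at hd2
        exact hℓp ((Nat.prime_dvd_prime_iff_eq hℓ hp).mp hd2)
      have hz := aux_isSquare_zmod_of_padic hdvd (hsqt ℓ hℓp)
      rcases htp with rfl | rfl
      · apply hnsq; simpa using hz
      · apply hnsq
        have hm1 : IsSquare (-1 : ZMod ℓ) := ZMod.exists_sq_eq_neg_one_iff.mpr (by omega)
        have h2 : IsSquare ((-1 : ZMod ℓ) * ((-(p:ℤ) : ℤ) : ZMod ℓ)) := hm1.mul hz
        simpa using h2
  -- dead code guard

end Aux

/-- Let `q₁ = ⟨a i⟩` and `q₂ = ⟨b i⟩` be non-degenerate quadratic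
forms over `ℚ` (of the same rank `n`) and `p` a prime. If `q₁ ⊗ ℚ_ℓ ≅ q₂ ⊗ ℚ_ℓ` for
all primes `ℓ ≠ p`, then `q₁` and `q₂` have the same discriminant in `ℚ^×/(ℚ^×)²`. -/
theorem discriminants_eq_of_equiv_away {n : ℕ} (a b : Fin n → ℚ) (ha : ∀ i, a i ≠ 0)
    (hb : ∀ i, b i ≠ 0) (p : Nat.Primes)
    (hloc : ∀ l : Nat.Primes, l ≠ p → EquivAt a b l) :
    ∃ c : ℚ, c ≠ 0 ∧ (∏ i, a i) = c ^ 2 * ∏ i, b i := by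
  have haprod : (∏ i, a i) ≠ 0 := Finset.prod_ne_zero_iff.mpr fun i _ => ha i
  have hbprod : (∏ i, b i) ≠ 0 := Finset.prod_ne_zero_iff.mpr fun i _ => hb i
  set D : ℚ := (∏ i, a i) / (∏ i, b i) with hDdef
  have hD0 : D ≠ 0 := div_ne_zero haprod hbprod
  have hsq : IsSquare D := by
    apply aux_rat_isSquare D hD0 p p.2
    intro ℓ instℓ hℓp
    have hl : (⟨ℓ, instℓ.1⟩ : Nat.Primes) ≠ p := fun hcon => hℓp (congrArg (fun x : Nat.Primes => (x:ℕ)) hcon)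
    have hequiv := hloc ⟨ℓ, instℓ.1⟩ hl
    haveI : Invertible (2 : ℚ_[ℓ]) := invertibleOfNonzero two_ne_zero
    obtain ⟨c, hc0, hcc⟩ := aux_prod_eq_of_equivalent _ _ hequiv
    have hbcast : (∏ i, ((b i : ℚ) : ℚ_[ℓ])) ≠ 0 :=
      Finset.prod_ne_zero_iff.mpr fun i _ => by exact_mod_cast hb i
    refine ⟨c, ?_⟩
    apply mul_right_cancel₀ hbcast
    have hDc : (D : ℚ_[ℓ]) * (∏ i, ((b i : ℚ) : ℚ_[ℓ])) = (∏ i, ((a i : ℚ) : ℚ_[ℓ])) := by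
      rw [hDdef]
      push_cast
      field_simp
    rw [hDc, hcc]
    ring
  obtain ⟨c, hc⟩ := hsq
  have hc0 : c ≠ 0 := by
    intro hcz
    rw [hcz, mul_zero] at hc
    exact hD0 hc
  refine ⟨c, hc0, ?_⟩
  have : (∏ i, a i) = D * (∏ i, b i) := by
    rw [hDdef]; field_simp
  rw [this, hc]; ring

end
end

section
/- An element a ∈ ℚ in ℚ×/(ℚ×)² is a square in ℚ if and only if it is a square in ℚ_ℓ for all primes ℓ except possibly one fixed prime p. -/
noncomputable section

lemma aux_isSquare_zmod {ℓ : ℕ} [Fact ℓ.Prime] (d : ℤ)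
    (h : ∃ x : ℚ_[ℓ], ((d : ℤ) : ℚ_[ℓ]) = x ^ 2) : IsSquare ((d : ZMod ℓ)) := by
  obtain ⟨x, hx⟩ := h
  have hxle : ‖x‖ ≤ 1 := by
    have h1 : ‖x‖ ^ 2 ≤ 1 := by
      rw [← norm_pow, ← hx]; exact Padic.norm_int_le_one d
    nlinarith [norm_nonneg x]
  set y : ℤ_[ℓ] := ⟨x, hxle⟩ with hy
  have hyd : (d : ℤ_[ℓ]) = y ^ 2 := by
    apply Subtype.coe_injective
    show ((d : ℤ_[ℓ]) : ℚ_[ℓ]) = ((y ^ 2 : ℤ_[ℓ]) : ℚ_[ℓ])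
    rw [PadicInt.coe_pow, PadicInt.coe_intCast]
    exact hx
  refine ⟨PadicInt.toZMod y, ?_⟩
  have h2 := congrArg (PadicInt.toZMod (p := ℓ)) hyd
  rw [map_intCast, map_pow] at h2
  rw [h2, sq]

lemma aux_even_val {q : ℕ} [Fact q.Prime] (d : ℤ) (hd : d ≠ 0)
    (h : ∃ x : ℚ_[q], ((d : ℤ) : ℚ_[q]) = x ^ 2) : Even (padicValInt q d) := by
  obtain ⟨x, hx⟩ := h
  have hx0 : x ≠ 0 := by
    rintro rfl
    rw [pow_two, mul_zero, Int.cast_eq_zero] at hx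
    exact hd hx
  have hv : ((d : ℚ_[q])).valuation = 2 * x.valuation := by
    rw [hx, sq, Padic.valuation_mul hx0 hx0]; ring
  rw [Padic.valuation_intCast] at hv
  have he : Even ((padicValInt q d : ℤ)) := ⟨x.valuation, by omega⟩
  exact_mod_cast he

lemma aux_exists_prime (p : ℕ) (hp : p.Prime) (hp2 : p ≠ 2) (a4 : ℕ) (ha4 : a4 % 2 = 1)
    (u : ZMod p) (hu : u ≠ 0) :
    ∃ ℓ : ℕ, ℓ.Prime ∧ ℓ % 4 = a4 % 4 ∧ ((ℓ : ZMod p) = u) := by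
  haveI : Fact p.Prime := ⟨hp⟩
  have hco : Nat.Coprime 4 p := by
    have h2p : Nat.Coprime 2 p := (Nat.coprime_primes Nat.prime_two hp).mpr (Ne.symm hp2)
    exact Nat.Coprime.pow_left 2 h2p
  obtain ⟨c, hc4, hcp⟩ := Nat.chineseRemainder hco a4 u.val
  haveI : NeZero (4 * p) := ⟨by have := hp.pos; omega⟩
  have hcunit : IsUnit ((c : ℕ) : ZMod (4 * p)) := by
    rw [ZMod.isUnit_iff_coprime]
    have hc2 : (c : ℕ) % 2 = 1 := by
      have h1 : (c : ℕ) % 4 = a4 % 4 := hc4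
      have := Nat.mod_mod_of_dvd (c : ℕ) (by norm_num : (2:ℕ) ∣ 4)
      omega
    have hcop2 : Nat.Coprime (c : ℕ) 4 := by
      have : Nat.Coprime (c : ℕ) 2 := by
        rw [Nat.coprime_comm]
        rw [Nat.Prime.coprime_iff_not_dvd Nat.prime_two]
        omega
      simpa using Nat.Coprime.pow_right 2 this
    have hcopp : Nat.Coprime (c : ℕ) p := by
      rw [Nat.coprime_comm, Nat.Prime.coprime_iff_not_dvd hp]
      have hval : (c : ℕ) % p = u.val := by
        have := (hcp : (c:ℕ) ≡ u.val [MOD p])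
        rw [Nat.ModEq] at this
        rw [this, Nat.mod_eq_of_lt (ZMod.val_lt u)]
      have hval0 : u.val ≠ 0 := fun h => hu ((ZMod.val_eq_zero u).mp h)
      intro hdvd
      rw [Nat.dvd_iff_mod_eq_zero] at hdvd
      omega
    exact Nat.Coprime.mul_right hcop2 hcopp
  obtain ⟨ℓ, -, hℓp, hℓc⟩ := Nat.forall_exists_prime_gt_and_eq_mod hcunit 0
  have hmod : ℓ ≡ c [MOD 4 * p] := (ZMod.natCast_eq_natCast_iff _ _ _).mp hℓc
  refine ⟨ℓ, hℓp, ?_, ?_⟩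
  · have h4 : ℓ ≡ c [MOD 4] := hmod.of_dvd (dvd_mul_right 4 p)
    rw [Nat.ModEq] at h4
    rw [h4]; exact hc4
  · have hpm : ℓ ≡ c [MOD p] := hmod.of_dvd (dvd_mul_left p 4)
    have : ℓ ≡ u.val [MOD p] := hpm.trans hcp
    rw [← ZMod.natCast_rightInverse u]
    exact (ZMod.natCast_eq_natCast_iff _ _ _).mpr this

/-- A nonzero rational number `a` is a square in `ℚ` if (and only
if) it is a square in `ℚ_ℓ` for all primes `ℓ` different from one fixed prime `p`. -/
theorem rat_is_square_of_is_square_away (a : ℚ) (ha : a ≠ 0) (p : Nat.Primes)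
    (hloc : ∀ l : Nat.Primes, l ≠ p → ∃ x : ℚ_[(l : ℕ)], (a : ℚ_[(l : ℕ)]) = x ^ 2) :
    ∃ x : ℚ, a = x ^ 2 := by
  set N : ℤ := a.num * (a.den : ℤ) with hNdef
  have hden0 : (a.den : ℤ) ≠ 0 := Int.natCast_ne_zero.mpr a.den_nz
  have hN0 : N ≠ 0 := mul_ne_zero (Rat.num_ne_zero.mpr ha) hden0
  obtain ⟨s, b, hbs, hsf⟩ := Nat.sq_mul_squarefree N.natAbs
  have hs0 : s ≠ 0 := by
    intro h; rw [h, mul_zero] at hbs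
    exact (Int.natAbs_ne_zero.mpr hN0) hbs.symm
  have hb0 : b ≠ 0 := by
    intro h; rw [h] at hbs; simp at hbs
    exact (Int.natAbs_ne_zero.mpr hN0) hbs.symm
  obtain ⟨d, hNd, hdabs⟩ : ∃ d : ℤ, N = (b : ℤ) ^ 2 * d ∧ (d = (s : ℤ) ∨ d = -(s : ℤ)) := by
    rcases Int.natAbs_eq N with h | h
    · exact ⟨(s : ℤ), by rw [h, ← hbs]; push_cast; ring, Or.inl rfl⟩
    · exact ⟨-(s : ℤ), by rw [h, ← hbs]; push_cast; ring, Or.inr rfl⟩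
  have hd0 : d ≠ 0 := by
    rcases hdabs with h | h <;> simp [h, hs0]
  -- transfer local squares to d
  have hd : ∀ l : Nat.Primes, l ≠ p → ∃ x : ℚ_[(l : ℕ)], ((d : ℤ) : ℚ_[(l : ℕ)]) = x ^ 2 := by
    intro l hl
    obtain ⟨x, hx⟩ := hloc l hl
    have hdenK : ((a.den : ℚ_[(l : ℕ)])) ≠ 0 := Nat.cast_ne_zero.mpr a.den_nz
    have hbK : ((b : ℚ_[(l : ℕ)])) ≠ 0 := Nat.cast_ne_zero.mpr hb0
    refine ⟨x * (a.den : ℚ_[(l : ℕ)]) / (b : ℚ_[(l : ℕ)]), ?_⟩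
    have hnum : ((a.num : ℚ_[(l : ℕ)])) = (a : ℚ_[(l : ℕ)]) * (a.den : ℚ_[(l : ℕ)]) := by
      rw [Rat.cast_def]; field_simp
    have h2 : ((a.num : ℚ_[(l : ℕ)])) * ((a.den : ℚ_[(l : ℕ)])) =
        ((b : ℚ_[(l : ℕ)])) ^ 2 * ((d : ℚ_[(l : ℕ)])) := by
      have h3 := congrArg (fun z : ℤ => (z : ℚ_[(l : ℕ)])) hNd
      rw [hNdef] at h3
      push_cast at h3
      exact h3
    rw [hnum] at h2
    rw [div_pow, eq_div_iff (pow_ne_zero 2 hbK), mul_pow, ← hx]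
    linear_combination -h2
  -- squares in residue fields
  have hZ : ∀ ℓ : ℕ, ℓ.Prime → ℓ ≠ (p : ℕ) → IsSquare ((d : ZMod ℓ)) := by
    intro ℓ hℓ hℓp
    haveI : Fact ℓ.Prime := ⟨hℓ⟩
    exact aux_isSquare_zmod d (hd ⟨ℓ, hℓ⟩ (fun h => hℓp (congrArg Subtype.val h)))
  -- s has no prime factors other than p
  have hps : s.primeFactors ⊆ {(p : ℕ)} := by
    intro q hq
    rw [Finset.mem_singleton]
    by_contra hqp
    have hqprime : q.Prime := Nat.prime_of_mem_primeFactors hq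
    have hqdvd : q ∣ s := Nat.dvd_of_mem_primeFactors hq
    haveI : Fact q.Prime := ⟨hqprime⟩
    have heven := aux_even_val (q := q) d hd0
      (hd ⟨q, hqprime⟩ (fun h => hqp (congrArg Subtype.val h)))
    have h1 : padicValInt q d = 1 := by
      have hnab : d.natAbs = s := by rcases hdabs with h | h <;> simp [h]
      rw [padicValInt, hnab]
      rw [← Nat.factorization_def s hqprime]
      exact le_antisymm (hsf.natFactorization_le_one q)
        (Nat.Prime.factorization_pos_of_dvd hqprime hs0 hqdvd)
    rw [h1] at heven
    exact (Nat.not_even_one) heven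
  have hs1p : s = 1 ∨ s = (p : ℕ) := by
    rcases Finset.subset_singleton_iff.mp hps with h | h <;>
      [left; right] <;>
    · have hprod := Nat.prod_primeFactors_of_squarefree hsf
      rw [h] at hprod
      simpa using hprod.symm
  -- the positive trivial case
  have hfinish : d = 1 → ∃ x : ℚ, a = x ^ 2 := by
    intro hd1
    refine ⟨(b : ℚ) / (a.den : ℚ), ?_⟩
    have hdQ : ((a.den : ℚ)) ≠ 0 := Nat.cast_ne_zero.mpr a.den_nz
    have h2 : ((a.num : ℚ)) * ((a.den : ℚ)) = ((b : ℚ)) ^ 2 := by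
      have h3 := congrArg (fun z : ℤ => (z : ℚ)) hNd
      rw [hNdef, hd1] at h3
      push_cast at h3
      simpa using h3
    have hnum' : (a : ℚ) * (a.den : ℚ) = (a.num : ℚ) := Rat.mul_den_eq_num a
    rw [div_pow, eq_div_iff (pow_ne_zero 2 hdQ)]
    linear_combination (a.den : ℚ) * hnum' + h2
  -- now exclude the bad cases
  rcases p.2.eq_two_or_odd' with hp2 | hpodd
  · -- p = 2
    rcases hs1p with hs1 | hsp <;> rcases hdabs with hdd | hdd
    · exact hfinish (by rw [hdd, hs1]; norm_num)
    · -- d = -1, use ℓ = 3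
      exfalso
      have h3 := hZ 3 (by norm_num) (by rw [hp2]; norm_num)
      rw [hdd, hs1] at h3
      push_cast at h3
      exact (by decide : ¬ IsSquare (-1 : ZMod 3)) h3
    · -- d = p = 2, use ℓ = 5
      exfalso
      have h5 := hZ 5 (by norm_num) (by rw [hp2]; norm_num)
      rw [hdd, hsp, hp2] at h5
      push_cast at h5
      exact (by decide : ¬ IsSquare (2 : ZMod 5)) h5
    · -- d = -2, use ℓ = 5
      exfalso
      have h5 := hZ 5 (by norm_num) (by rw [hp2]; norm_num)
      rw [hdd, hsp, hp2] at h5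
      push_cast at h5
      exact (by decide : ¬ IsSquare (-2 : ZMod 5)) h5
  · -- p odd
    have hp2 : (p : ℕ) ≠ 2 := by
      intro h; rw [h] at hpodd; exact (by norm_num : ¬ Odd 2) hpodd
    haveI : Fact (Nat.Prime (p : ℕ)) := ⟨p.2⟩
    rcases hs1p with hs1 | hsp
    · rcases hdabs with hdd | hdd
      · exact hfinish (by rw [hdd, hs1]; norm_num)
      · -- d = -1
        exfalso
        obtain ⟨ℓ, hℓp, hℓ4, hℓu⟩ := aux_exists_prime (p : ℕ) p.2 hp2 3 (by norm_num)
          (1 : ZMod (p : ℕ)) one_ne_zero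
        haveI : Fact ℓ.Prime := ⟨hℓp⟩
        have hℓne : ℓ ≠ (p : ℕ) := by
          intro h; rw [h, ZMod.natCast_self] at hℓu; exact one_ne_zero hℓu.symm
        have hsq := hZ ℓ hℓp hℓne
        rw [hdd, hs1] at hsq
        push_cast at hsq
        rw [ZMod.exists_sq_eq_neg_one_iff] at hsq
        omega
    · -- d = ± p
      exfalso
      obtain ⟨u, hu⟩ := FiniteField.exists_nonsquare
        (F := ZMod (p : ℕ)) (by rw [ZMod.ringChar_zmod_n]; exact hp2)
      have hu0 : u ≠ 0 := fun h => hu (h ▸ ⟨0, by simp⟩)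
      obtain ⟨ℓ, hℓp, hℓ4, hℓu⟩ := aux_exists_prime (p : ℕ) p.2 hp2 1 (by norm_num) u hu0
      haveI : Fact ℓ.Prime := ⟨hℓp⟩
      have hℓne : ℓ ≠ (p : ℕ) := by
        intro h; rw [h, ZMod.natCast_self] at hℓu; exact hu0 hℓu.symm
      have hℓ2 : ℓ ≠ 2 := by intro h; rw [h] at hℓ4; norm_num at hℓ4
      have hsq := hZ ℓ hℓp hℓne
      -- reduce to IsSquare ((p : ZMod ℓ))
      have hsqp : IsSquare (((p : ℕ) : ZMod ℓ)) := by
        have hneg : IsSquare (-1 : ZMod ℓ) :=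
          ZMod.exists_sq_eq_neg_one_iff.mpr (by omega)
        rcases hdabs with hdd | hdd
        · rw [hdd, hsp] at hsq; push_cast at hsq; exact hsq
        · rw [hdd, hsp] at hsq; push_cast at hsq
          obtain ⟨y, hy⟩ := hsq
          obtain ⟨z, hz⟩ := hneg
          have hz0 : z ≠ 0 := by
            intro h; rw [h, mul_zero] at hz
            exact (neg_ne_zero.mpr (one_ne_zero)) hz
          refine ⟨y * z⁻¹, ?_⟩
          field_simp
          linear_combination hy - ((p:ℕ) : ZMod ℓ) * hz
      -- quadratic reciprocity
      have hrec := legendreSym.quadratic_reciprocity_one_mod_four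
        (p := ℓ) (q := (p : ℕ)) hℓ4 hp2
      have hleg : legendreSym (p : ℕ) ℓ = -1 := by
        rw [legendreSym.eq_neg_one_iff]
        rw [Int.cast_natCast, hℓu]
        exact hu
      rw [hleg] at hrec
      have hfin := (legendreSym.eq_neg_one_iff (p := ℓ)).mp hrec.symm
      rw [Int.cast_natCast] at hfin
      exact hfin hsqp

end
end

section
/- Let F be a p-adic field with a nontrivial involution * with fixed field F₀, and let (V, q) be a CM-quadratic space with respect to F, i.e. V is a 1-dimensional F-vector space regarded over ℚ_p, q is a non-degenerate ℚ_p-quadratic form on V, and the q-adjoint of multiplication by α ∈ F is multiplication by α*. Then, after choosing a nonzero v ∈ V and identifying V ≅ F, there exists a unique a ∈ F₀× such that q(x) = Tr_{F₀/ℚ_p}(a·N_{F/F₀}(x)) for all x ∈ F. -/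
noncomputable section

/-- Let `F` be a `p`-adic field with nontrivial involution `σ` and
fixed field `F₀`, and let `(V, q)` be a CM-quadratic space with respect to `F`.
After choosing a nonzero vector and identifying `V ≅ F`, there is a unique
`a ∈ F₀^×` such that `q(x) = Tr_{F₀/ℚ_p}(a·N_{F/F₀}(x))` for every `x ∈ F`.

Here `V = F`, `N_{F/F₀}(x) = x·σ(x)`, and since `[F : F₀] = 2` the trace from `F₀`
is expressed as `Tr_{F₀/ℚ_p}(z) = (1/2)·Tr_{F/ℚ_p}(z)` for `z ∈ F₀`;
`a ∈ F₀` is expressed by `σ a = a`. -/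
theorem cm_quadratic_form_gauge (p : ℕ) [Fact p.Prime] (F : Type*) [Field F]
    [Algebra ℚ_[p] F] [FiniteDimensional ℚ_[p] F] (σ : F ≃ₐ[ℚ_[p]] F)
    (hσinv : ∀ x, σ (σ x) = x) (hσne : σ ≠ AlgEquiv.refl)
    (q : QuadraticForm ℚ_[p] F)
    (hnd : ∀ x : F, (∀ y : F, QuadraticMap.polar q x y = 0) → x = 0)
    (hCM : ∀ (α x y : F), QuadraticMap.polar q (α * x) y = QuadraticMap.polar q x (σ α * y)) :
    ∃! a : F, σ a = a ∧ a ≠ 0 ∧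
      ∀ x : F, q x = (1 / 2) * Algebra.trace ℚ_[p] F (a * (x * σ x)) := by
  set T := Algebra.trace ℚ_[p] F with hT
  have hB : (Algebra.traceForm ℚ_[p] F).Nondegenerate :=
    traceForm_nondegenerate ℚ_[p] F
  set L : Module.Dual ℚ_[p] F := (QuadraticMap.polarBilin q) 1 with hL
  set c : F := ((Algebra.traceForm ℚ_[p] F).toDual hB).symm L with hc
  have hcdef : ∀ y : F, T (c * y) = QuadraticMap.polar q 1 y := by
    intro y
    have h := LinearMap.BilinForm.apply_toDual_symm_apply
      (B := Algebra.traceForm ℚ_[p] F) (hB := hB) L y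
    rw [Algebra.traceForm_apply] at h
    exact h
  have key : ∀ x y : F, QuadraticMap.polar q x y = T (c * (σ x * y)) := by
    intro x y
    have h := hCM x 1 y
    rw [mul_one] at h
    rw [h, ← hcdef]
  have htrσ : ∀ z : F, T (σ z) = T z := fun z => Algebra.trace_eq_of_algEquiv σ z
  have htnd : ∀ d : F, (∀ y : F, T (d * y) = 0) → d = 0 := by
    intro d hd
    exact hB.1 d (fun y => by simpa [Algebra.traceForm_apply] using hd y)
  have hσc : σ c = c := by
    have hsymm : ∀ x : F, T (c * σ x) = T (c * x) := by
      intro x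
      have h1 := key x 1
      have h2 := key 1 x
      rw [QuadraticMap.polar_comm, h2] at h1
      have h1' := h1.symm
      simpa using h1'
    have hz : ∀ y : F, T ((σ c - c) * y) = 0 := by
      intro y
      have h3 : T (σ (c * σ y)) = T (c * σ y) := htrσ _
      rw [map_mul, hσinv] at h3
      have h4 := hsymm y
      rw [sub_mul, map_sub, h3, h4, sub_self]
    exact sub_eq_zero.mp (htnd _ hz)
  have hcne : c ≠ 0 := by
    intro h0
    have : (1 : F) = 0 := hnd 1 (fun y => by rw [key, h0, zero_mul, map_zero])
    exact one_ne_zero this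
  have hq : ∀ x : F, q x = (1 / 2) * T (c * (x * σ x)) := by
    intro x
    have h2 := key x x
    rw [QuadraticMap.polar_self, show c * (σ x * x) = c * (x * σ x) from by ring,
      two_smul] at h2
    linear_combination h2 / 2
  refine ⟨c, ⟨hσc, hcne, hq⟩, ?_⟩
  rintro a ⟨hσa, -, hqa⟩
  set d := a - c with hd
  have hσd : σ d = d := by rw [hd, map_sub, hσa, hσc]
  have hnorm : ∀ x : F, T (d * (x * σ x)) = 0 := by
    intro x
    have h1 := hqa x
    have h2 := hq x
    rw [h2] at h1
    have h3 : T (c * (x * σ x)) = T (a * (x * σ x)) := by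
      linear_combination 2 * h1
    rw [hd, sub_mul, map_sub, ← h3, sub_self]
  have hbil : ∀ x y : F, T (d * (x * σ y)) + T (d * (y * σ x)) = 0 := by
    intro x y
    have h1 := hnorm (x + y)
    have h2 := hnorm x
    have h3 := hnorm y
    have he : d * ((x + y) * σ (x + y)) =
        d * (x * σ x) + d * (y * σ y) + (d * (x * σ y) + d * (y * σ x)) := by
      rw [map_add]; ring
    rw [he, map_add, map_add, map_add, h2, h3] at h1
    linear_combination h1
  have hswap : ∀ x y : F, T (d * (y * σ x)) = T (d * (x * σ y)) := by
    intro x y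
    have h := htrσ (d * (y * σ x))
    rw [show σ (d * (y * σ x)) = d * (x * σ y) from by
      rw [map_mul, map_mul, hσd, hσinv]; ring] at h
    exact h.symm
  have hall : ∀ x : F, T (d * x) = 0 := by
    intro x
    have h1 := hbil x 1
    rw [hswap x 1, map_one, mul_one] at h1
    linear_combination h1 / 2
  have : d = 0 := htnd d hall
  rw [hd] at this
  exact sub_eq_zero.mp this


end
end

section
/- Let (V, q) be a CM-quadratic space with respect to (F, *), with fixed field F₀, and v ∈ V ⊗_{ℚ_p} F the canonical eigenvector. Then 2·b(v, v*) lies in F₀× and equals the gauge of q: for w = Σ_σ σ(γ)σ(v) ∈ V with γ ∈ F, one has q(w) = Tr_{F₀/ℚ_p}(2b(v,v*)·N_{F/F₀}(γ)). -/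
open scoped TensorProduct

noncomputable section

namespace CMGaugeAux


/-- Compatibility of the base-changed bilinear form with algebra maps. -/
lemma compat {K F E : Type*} [Field K] [Field F] [Field E]
    [Algebra K F] [Algebra K E]
    (b : F →ₗ[K] F →ₗ[K] K)
    (τ : F →ₐ[K] E)
    (Btt : (E ⊗[K] F) →ₗ[E] (E ⊗[K] F) →ₗ[E] E)
    (hBtt : ∀ (x y : E) (a c : F), Btt (x ⊗ₜ[K] a) (y ⊗ₜ[K] c) = x * y * algebraMap K E (b a c))
    (x y : F ⊗[K] F) :
    τ (LinearMap.BilinForm.baseChange F b x y) =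
      Btt (Algebra.TensorProduct.map τ (AlgHom.id K F) x)
          (Algebra.TensorProduct.map τ (AlgHom.id K F) y) := by
  induction x using TensorProduct.induction_on with
  | zero => simp
  | tmul u a =>
    induction y using TensorProduct.induction_on with
    | zero => simp
    | tmul w c =>
      simp only [LinearMap.BilinForm.baseChange_tmul, Algebra.TensorProduct.map_tmul,
        AlgHom.coe_id, id_eq, hBtt]
      rw [Algebra.smul_def, map_mul, map_mul, AlgHom.commutes]
      ring
    | add y1 y2 h1 h2 => simp only [map_add, h1, h2]
  | add x1 x2 h1 h2 =>
      simp only [map_add, h1, h2, LinearMap.add_apply]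

lemma trace_eq_sum (K F Ft : Type*) [Field K] [Field F] [Field Ft] [Algebra K F] [Algebra K Ft]
    [FiniteDimensional K F] [Algebra.IsSeparable K F] [Fintype (F →ₐ[K] Ft)]
    (hcard : Fintype.card (F →ₐ[K] Ft) = Module.finrank K F) (x : F) :
    algebraMap K Ft (Algebra.trace K F x) = ∑ τ : F →ₐ[K] Ft, τ x := by
  classical
  let E := AlgebraicClosure Ft
  have hinj : Function.Injective (algebraMap Ft E) := (algebraMap Ft E).injective
  let ψ : (F →ₐ[K] Ft) → (F →ₐ[K] E) := fun τ => (IsScalarTower.toAlgHom K Ft E).comp τ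
  have hψinj : Function.Injective ψ := by
    intro τ τ' h
    ext z
    exact hinj (DFunLike.congr_fun h z)
  have hcardE : Fintype.card (F →ₐ[K] E) = Module.finrank K F := AlgHom.card K F E
  have hψ : Function.Bijective ψ :=
    (Fintype.bijective_iff_injective_and_card ψ).mpr ⟨hψinj, by rw [hcard, hcardE]⟩
  have h1 : algebraMap K E (Algebra.trace K F x) = ∑ τ' : F →ₐ[K] E, τ' x :=
    trace_eq_sum_embeddings E
  have h2 : ∑ τ : F →ₐ[K] Ft, algebraMap Ft E (τ x) = ∑ τ' : F →ₐ[K] E, τ' x :=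
    Fintype.sum_bijective ψ hψ _ _ (fun τ => rfl)
  apply hinj
  rw [← IsScalarTower.algebraMap_apply, h1, ← h2, map_sum]



lemma psi_inj (K F Ft : Type*) [Field K] [Field F] [Field Ft] [Algebra K F] [Algebra K Ft]
    [FiniteDimensional K F] [Fintype (F →ₐ[K] Ft)]
    (hcard : Fintype.card (F →ₐ[K] Ft) = Module.finrank K F)
    (Ψ : (F →ₐ[K] Ft) → Module.Dual Ft (Ft ⊗[K] F))
    (hΨ : ∀ (ρ : F →ₐ[K] Ft) (x : Ft) (y : F), Ψ ρ (x ⊗ₜ[K] y) = x * ρ y)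
    (u : Ft ⊗[K] F) (hu : ∀ ρ, Ψ ρ u = 0) : u = 0 := by
  classical
  haveI : Nonempty (F →ₐ[K] Ft) :=
    Fintype.card_pos_iff.mp (by rw [hcard]; exact Module.finrank_pos)
  have hmon : LinearIndependent Ft (fun (ρ : F →ₐ[K] Ft) => ((ρ : F →* Ft) : F → Ft)) :=
    (linearIndependent_monoidHom F Ft).comp ((↑) : (F →ₐ[K] Ft) → F →* Ft)
      (fun f g hfg => AlgHom.ext fun x => DFunLike.congr_fun hfg x)
  have hli : LinearIndependent Ft Ψ := by
    rw [Fintype.linearIndependent_iff] at hmon ⊢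
    intro c hc
    apply hmon c
    funext y
    have h := LinearMap.congr_fun hc ((1 : Ft) ⊗ₜ[K] y)
    simpa [hΨ] using h
  have hsp : Submodule.span Ft (Set.range Ψ) = ⊤ :=
    hli.span_eq_top_of_card_eq_finrank
      (by rw [Subspace.dual_finrank_eq, Module.finrank_baseChange, hcard])
  rw [← Module.forall_dual_apply_eq_zero_iff Ft u]
  intro g
  have hle : Submodule.span Ft (Set.range Ψ) ≤
      LinearMap.ker (Module.Dual.eval Ft (Ft ⊗[K] F) u) := by
    rw [Submodule.span_le]
    rintro _ ⟨ρ, rfl⟩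
    simpa [LinearMap.mem_ker, Module.Dual.eval_apply] using hu ρ
  have hg : g ∈ Submodule.span Ft (Set.range Ψ) := by rw [hsp]; exact Submodule.mem_top
  simpa [Module.Dual.eval_apply] using hle hg

lemma nondeg (K F Ft : Type*) [Field K] [Field F] [Field Ft] [Algebra K F] [Algebra K Ft]
    [FiniteDimensional K F]
    (b : F →ₗ[K] F →ₗ[K] K) (hsymm : ∀ x y, b x y = b y x)
    (hnd : ∀ x : F, (∀ y : F, b x y = 0) → x = 0)
    (Bt : (Ft ⊗[K] F) →ₗ[Ft] (Ft ⊗[K] F) →ₗ[Ft] Ft)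
    (hBt : ∀ (x y : Ft) (a c : F), Bt (x ⊗ₜ[K] a) (y ⊗ₜ[K] c) = x * y * algebraMap K Ft (b a c))
    (u : Ft ⊗[K] F) (hu : ∀ y : F, Bt u ((1 : Ft) ⊗ₜ[K] y) = 0) : u = 0 := by
  classical
  set n := Module.finrank K F with hn
  let e := Module.finBasis K F
  let T : F →ₗ[K] (Fin n → K) := LinearMap.pi (fun i => b (e i))
  have hTinj : Function.Injective T := by
    rw [← LinearMap.ker_eq_bot, LinearMap.ker_eq_bot']
    intro y hy
    have hy' : ∀ i, b (e i) y = 0 := fun i => congrFun hy i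
    apply hnd
    intro x
    rw [hsymm]
    conv_lhs => rw [← e.sum_repr x]
    rw [map_sum, LinearMap.sum_apply]
    simp [hy']
  have hTsurj : Function.Surjective T := by
    have := (LinearMap.injective_iff_surjective_of_finrank_eq_finrank
      (by simp [hn]) (f := T)).mp hTinj
    exact this
  have hzero : ∀ k, (e.baseChange Ft).repr u k = 0 := by
    intro k
    obtain ⟨yk, hyk⟩ := hTsurj (Pi.single k 1)
    have hbei : ∀ i, b (e i) yk = if i = k then 1 else 0 := by
      intro i
      have h := congrFun hyk i
      simpa [T, Pi.single_apply] using h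
    have h := hu yk
    conv_lhs at h => rw [← (e.baseChange Ft).sum_repr u]
    rw [map_sum, LinearMap.sum_apply] at h
    simp only [map_smul, LinearMap.smul_apply, Module.Basis.baseChange_apply, hBt, hbei,
      apply_ite (algebraMap K Ft), map_one, map_zero, mul_ite, mul_one, mul_zero,
      smul_eq_mul, one_mul] at h
    simpa [Finset.sum_ite_eq'] using h
  have := (e.baseChange Ft).sum_repr u
  rw [← this]
  simp [hzero]


end CMGaugeAux

set_option maxHeartbeats 1000000 in
/-- Let `(V, q)` be a CM-quadratic space with respect to `(F, σ)`
with fixed field `F₀` (here `V = F`, `b` the bilinear form of `q`, so `b(x,x) = q(x)`),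
`ι : F → F̃` the distinguished embedding into the Galois closure, and
`v ∈ V ⊗_{ℚ_p} F = F ⊗_{ℚ_p} F` the canonical eigenvector.  Then `2·b(v, v*)` lies in
`F₀^×` — i.e. it is `ι(a)` for some `a ∈ F` with `σ(a) = a`, `a ≠ 0` — and it equals
the gauge of `q`: for any `w ∈ V` whose coordinates in the basis `(τ(v))_{τ ∈ Γ}` of
`V ⊗ F̃` are `(τ(γ))_{τ ∈ Γ}` for some `γ ∈ F`, one has
`q(w) = Tr_{F₀/ℚ_p}(2b(v,v*)·N_{F/F₀}(γ)) = (1/2)·Tr_{F/ℚ_p}(a·γ·σ(γ))`. -/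
theorem cm_gauge_via_eigenvector (p : ℕ) [Fact p.Prime]
    (F Ft : Type*) [Field F] [Field Ft] [Algebra ℚ_[p] F] [Algebra ℚ_[p] Ft]
    [FiniteDimensional ℚ_[p] F] [Fintype (F →ₐ[ℚ_[p]] Ft)]
    (hcard : Fintype.card (F →ₐ[ℚ_[p]] Ft) = Module.finrank ℚ_[p] F)
    (ι : F →ₐ[ℚ_[p]] Ft)
    (σ : F ≃ₐ[ℚ_[p]] F) (hσinv : ∀ x, σ (σ x) = x) (hσne : σ ≠ AlgEquiv.refl)
    (q : QuadraticForm ℚ_[p] F)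
    (b : F →ₗ[ℚ_[p]] F →ₗ[ℚ_[p]] ℚ_[p])
    (hsymm : ∀ x y, b x y = b y x)
    (hbq : ∀ x, b x x = q x)
    (hnd : ∀ x : F, (∀ y : F, b x y = 0) → x = 0)
    (hCM : ∀ (α x y : F), b (α * x) y = b x (σ α * y))
    (Bt : (Ft ⊗[ℚ_[p]] F) →ₗ[Ft] (Ft ⊗[ℚ_[p]] F) →ₗ[Ft] Ft)
    (hBt : ∀ (x y : Ft) (a c : F),
      Bt (x ⊗ₜ[ℚ_[p]] a) (y ⊗ₜ[ℚ_[p]] c) = x * y * algebraMap ℚ_[p] Ft (b a c))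
    (v : F ⊗[ℚ_[p]] F) (hv : v ≠ 0)
    (heig : ∀ α : F,
      (Algebra.TensorProduct.includeRight (R := ℚ_[p]) (A := F) α) * v =
        (Algebra.TensorProduct.includeLeft (R := ℚ_[p]) (S := ℚ_[p]) (B := F) α) * v) :
    ∃ a : F, σ a = a ∧ a ≠ 0 ∧
      ι a = 2 * Bt (Algebra.TensorProduct.map ι (AlgHom.id ℚ_[p] F) v)
          (Algebra.TensorProduct.map (ι.comp σ.toAlgHom) (AlgHom.id ℚ_[p] F) v) ∧
      ∀ (γ w : F),
        ((1 : Ft) ⊗ₜ[ℚ_[p]] w =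
          ∑ τ : F →ₐ[ℚ_[p]] Ft, τ γ • Algebra.TensorProduct.map τ (AlgHom.id ℚ_[p] F) v) →
        q w = (1 / 2) * Algebra.trace ℚ_[p] F (a * (γ * σ γ)) := by
  classical
  have hKinjF : Function.Injective (algebraMap ℚ_[p] Ft) := (algebraMap ℚ_[p] Ft).injective
  haveI : CharZero Ft := charZero_of_injective_algebraMap hKinjF
  haveI : CharZero F := charZero_of_injective_algebraMap (algebraMap ℚ_[p] F).injective
  -- abbreviations
  set j : (F →ₐ[ℚ_[p]] Ft) → (F ⊗[ℚ_[p]] F →ₐ[ℚ_[p]] Ft ⊗[ℚ_[p]] F) :=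
    fun τ => Algebra.TensorProduct.map τ (AlgHom.id ℚ_[p] F) with hj
  let Ψ : (F →ₐ[ℚ_[p]] Ft) → ((Ft ⊗[ℚ_[p]] F) →ₐ[Ft] Ft) :=
    fun ρ => Algebra.TensorProduct.lift (AlgHom.id Ft Ft) ρ (fun _ _ => Commute.all _ _)
  let mσ : F ⊗[ℚ_[p]] F →ₐ[ℚ_[p]] F ⊗[ℚ_[p]] F :=
    Algebra.TensorProduct.map σ.toAlgHom (AlgHom.id ℚ_[p] F)
  let B' := LinearMap.BilinForm.baseChange F b
  have hΨtmul : ∀ (ρ : F →ₐ[ℚ_[p]] Ft) (x : Ft) (y : F), Ψ ρ (x ⊗ₜ[ℚ_[p]] y) = x * ρ y := by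
    intro ρ x y
    simp [Ψ, Algebra.TensorProduct.lift_tmul]
  -- eigenvector property after push-forward
  have heig' : ∀ (τ : F →ₐ[ℚ_[p]] Ft) (α : F),
      ((1 : Ft) ⊗ₜ[ℚ_[p]] α) * j τ v = τ α • j τ v := by
    intro τ α
    have h := congrArg (j τ) (heig α)
    rw [map_mul, map_mul] at h
    have h1 : j τ ((Algebra.TensorProduct.includeRight (R := ℚ_[p]) (A := F)) α)
        = (1 : Ft) ⊗ₜ[ℚ_[p]] α := by
      simp [hj, Algebra.TensorProduct.includeRight_apply]
    have h2 : j τ ((Algebra.TensorProduct.includeLeft (R := ℚ_[p]) (S := ℚ_[p]) (B := F)) α)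
        = (τ α) ⊗ₜ[ℚ_[p]] (1 : F) := by
      simp [hj, Algebra.TensorProduct.includeLeft_apply]
    rw [h1, h2] at h
    rw [h]
    have h3 : (τ α) ⊗ₜ[ℚ_[p]] (1 : F) = τ α • ((1 : Ft) ⊗ₜ[ℚ_[p]] (1 : F)) := by
      rw [TensorProduct.smul_tmul', smul_eq_mul, mul_one]
    rw [h3, ← Algebra.TensorProduct.one_def, smul_mul_assoc, one_mul]
  -- off-diagonal vanishing for Ψ
  have hoff : ∀ τ ρ : F →ₐ[ℚ_[p]] Ft, τ ≠ ρ → Ψ ρ (j τ v) = 0 := by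
    intro τ ρ hne
    by_contra h0
    apply hne
    ext α
    have h := congrArg (Ψ ρ) (heig' τ α)
    rw [map_mul, hΨtmul, map_smul] at h
    rw [one_mul, smul_eq_mul] at h
    exact (mul_right_cancel₀ h0 h).symm
  -- injectivity of j τ
  have hjlin : ∀ (τ : F →ₐ[ℚ_[p]] Ft) z,
      j τ z = LinearMap.rTensor F (τ.toLinearMap) z := by
    intro τ z
    induction z using TensorProduct.induction_on with
    | zero => simp
    | tmul x y =>
      rw [hj]
      simp only [Algebra.TensorProduct.map_tmul, LinearMap.rTensor_tmul,
        AlgHom.toLinearMap_apply, AlgHom.coe_id, id_eq, LinearMap.id_coe]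
    | add a c h1 h2 => rw [map_add, map_add, h1, h2]
  have hjinj : ∀ τ : F →ₐ[ℚ_[p]] Ft, Function.Injective (j τ) := by
    intro τ x y h
    have hinj : Function.Injective (LinearMap.rTensor F (τ.toLinearMap)) :=
      Module.Flat.rTensor_preserves_injective_linearMap _ (τ.toRingHom.injective)
    apply hinj
    rw [← hjlin, ← hjlin, h]
  -- diagonal values nonzero
  have hd : ∀ τ : F →ₐ[ℚ_[p]] Ft, Ψ τ (j τ v) ≠ 0 := by
    intro τ h0
    apply hv
    apply hjinj τ
    rw [map_zero]
    apply CMGaugeAux.psi_inj ℚ_[p] F Ft hcard (fun ρ => (Ψ ρ).toLinearMap) hΨtmul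
    intro ρ
    by_cases hρ : τ = ρ
    · subst hρ; exact h0
    · exact hoff τ ρ hρ
  -- span of the translated eigenvectors
  haveI : Nonempty (F →ₐ[ℚ_[p]] Ft) := ⟨ι⟩
  have hspan : Submodule.span Ft (Set.range (fun τ : F →ₐ[ℚ_[p]] Ft => j τ v)) = ⊤ := by
    have hli : LinearIndependent Ft (fun τ : F →ₐ[ℚ_[p]] Ft => j τ v) := by
      rw [Fintype.linearIndependent_iff]
      intro c hc ρ
      have h : (Ψ ρ).toLinearMap (∑ τ : F →ₐ[ℚ_[p]] Ft, c τ • j τ v) = 0 := by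
        rw [hc]; simp
      rw [map_sum] at h
      simp only [map_smul] at h
      rw [Finset.sum_eq_single ρ (fun τ _ hτ => by
        simp only [AlgHom.toLinearMap_apply]
        rw [hoff τ ρ hτ, smul_zero]) (fun hρ => absurd (Finset.mem_univ ρ) hρ)] at h
      simp only [AlgHom.toLinearMap_apply, smul_eq_mul] at h
      rcases mul_eq_zero.mp h with h | h
      · exact h
      · exact absurd h (hd ρ)
    exact hli.span_eq_top_of_card_eq_finrank
      (by rw [Module.finrank_baseChange, hcard])
  -- moving (1 ⊗ α) across Bt
  have hBmove : ∀ (α : F) (x y : Ft ⊗[ℚ_[p]] F),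
      Bt (((1 : Ft) ⊗ₜ[ℚ_[p]] α) * x) y = Bt x (((1 : Ft) ⊗ₜ[ℚ_[p]] (σ α)) * y) := by
    intro α x y
    induction x using TensorProduct.induction_on with
    | zero => simp
    | tmul u a =>
      induction y using TensorProduct.induction_on with
      | zero => simp
      | tmul w c =>
        rw [Algebra.TensorProduct.tmul_mul_tmul, Algebra.TensorProduct.tmul_mul_tmul,
          hBt, hBt, hCM α a c]
        ring_nf
      | add y1 y2 h1 h2 => rw [mul_add, map_add, map_add, h1, h2]
    | add x1 x2 h1 h2 =>
      rw [mul_add, map_add, map_add, LinearMap.add_apply, LinearMap.add_apply, h1, h2]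
  -- orthogonality for Bt
  have horth : ∀ τ ρ : F →ₐ[ℚ_[p]] Ft, ρ ≠ τ.comp σ.toAlgHom →
      Bt (j τ v) (j ρ v) = 0 := by
    intro τ ρ hne
    by_contra h0
    apply hne
    ext x
    have h := hBmove (σ x) (j τ v) (j ρ v)
    rw [heig' τ (σ x), heig' ρ (σ (σ x)), hσinv x] at h
    rw [map_smul, map_smul, LinearMap.smul_apply, smul_eq_mul, smul_eq_mul] at h
    simpa [AlgHom.comp_apply] using (mul_right_cancel₀ h0 h).symm
  -- pure-tensor formula for B'
  have hB'tmul : ∀ (x y : F) (a c : F),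
      B' (x ⊗ₜ[ℚ_[p]] a) (y ⊗ₜ[ℚ_[p]] c) = x * y * algebraMap ℚ_[p] F (b a c) := by
    intro x y a c
    show LinearMap.BilinForm.baseChange F b (x ⊗ₜ[ℚ_[p]] a) (y ⊗ₜ[ℚ_[p]] c) = _
    rw [LinearMap.BilinForm.baseChange_tmul, Algebra.smul_def]
    ring
  -- compatibility j τ with B'
  have hjm : ∀ (τ : F →ₐ[ℚ_[p]] Ft) z, j τ (mσ z) = j (τ.comp σ.toAlgHom) z := by
    intro τ z
    induction z using TensorProduct.induction_on with
    | zero => simp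
    | tmul x y => simp [hj, mσ]
    | add a c h1 h2 => rw [map_add, map_add, map_add, h1, h2]
  have hmσ2 : ∀ z, mσ (mσ z) = z := by
    intro z
    induction z using TensorProduct.induction_on with
    | zero => simp
    | tmul x y => simp [mσ, hσinv x]
    | add a c h1 h2 => rw [map_add, map_add, h1, h2]
  have hτB : ∀ τ : F →ₐ[ℚ_[p]] Ft,
      τ (B' v (mσ v)) = Bt (j τ v) (j (τ.comp σ.toAlgHom) v) := by
    intro τ
    rw [CMGaugeAux.compat b τ Bt hBt v (mσ v)]
    exact congrArg (fun z => Bt (j τ v) z) (hjm τ v)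
  -- the element a
  refine ⟨2 * B' v (mσ v), ?_, ?_, ?_, ?_⟩
  · -- σ-invariance
    have hσc : σ (B' v (mσ v)) = B' (mσ v) (mσ (mσ v)) := by
      have := CMGaugeAux.compat b σ.toAlgHom B' hB'tmul v (mσ v)
      simpa [mσ] using this
    rw [map_mul, map_ofNat, hσc, hmσ2 v]
    congr 1
    -- symmetry of B'
    have hB'symm : ∀ x y : F ⊗[ℚ_[p]] F, B' x y = B' y x := by
      intro x y
      induction x using TensorProduct.induction_on with
      | zero => simp
      | tmul u a =>
        induction y using TensorProduct.induction_on with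
        | zero => simp
        | tmul w c => rw [hB'tmul, hB'tmul, hsymm]; ring
        | add y1 y2 h1 h2 =>
          simp only [map_add, LinearMap.add_apply, h1, h2]
      | add x1 x2 h1 h2 =>
        simp only [map_add, LinearMap.add_apply, h1, h2]
    exact hB'symm (mσ v) v
  · -- a ≠ 0
    intro h
    have h2 : B' v (mσ v) = 0 := by
      rcases mul_eq_zero.mp h with h | h
      · exact absurd h two_ne_zero
      · exact h
    have hall : ∀ ρ : F →ₐ[ℚ_[p]] Ft, Bt (j ι v) (j ρ v) = 0 := by
      intro ρ
      by_cases hρ : ρ = ι.comp σ.toAlgHom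
      · subst hρ
        rw [← hτB ι, h2, map_zero]
      · exact horth ι ρ hρ
    have h1 : Bt (j ι v) = 0 := by
      apply LinearMap.ext_on hspan
      rintro _ ⟨ρ, rfl⟩
      simpa using hall ρ
    have h3 : j ι v = 0 := by
      apply CMGaugeAux.nondeg ℚ_[p] F Ft b hsymm hnd Bt hBt
      intro y
      rw [h1]; rfl
    exact hv (hjinj ι (by rw [h3, map_zero]))
  · -- value of ι a
    rw [map_mul, map_ofNat, hτB ι]
  · -- the gauge formula
    intro γ w hw
    have lhs1 : algebraMap ℚ_[p] Ft (q w) =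
        Bt ((1 : Ft) ⊗ₜ[ℚ_[p]] w) ((1 : Ft) ⊗ₜ[ℚ_[p]] w) := by
      rw [hBt, hbq]; ring
    have hw' : (1 : Ft) ⊗ₜ[ℚ_[p]] w = ∑ τ : F →ₐ[ℚ_[p]] Ft, τ γ • j τ v := by
      rw [hw, hj]
    have expand : Bt ((1 : Ft) ⊗ₜ[ℚ_[p]] w) ((1 : Ft) ⊗ₜ[ℚ_[p]] w)
        = ∑ τ : F →ₐ[ℚ_[p]] Ft,
            (τ γ * τ (σ γ)) * Bt (j τ v) (j (τ.comp σ.toAlgHom) v) := by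
      rw [hw', LinearMap.BilinForm.sum_left]
      refine Finset.sum_congr rfl (fun τ _ => ?_)
      rw [map_smul, LinearMap.smul_apply, LinearMap.BilinForm.sum_right]
      rw [Finset.sum_eq_single (τ.comp σ.toAlgHom) (fun ρ _ hρ => by
        rw [map_smul, horth τ ρ hρ, smul_zero])
        (fun hρ => absurd (Finset.mem_univ _) hρ)]
      rw [map_smul]
      simp only [smul_eq_mul, AlgHom.comp_apply, AlgEquiv.toAlgHom_eq_coe,
        AlgHom.coe_coe, AlgEquiv.coe_algHom]
      ring
    have key : algebraMap ℚ_[p] Ft (2 * q w)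
        = algebraMap ℚ_[p] Ft (Algebra.trace ℚ_[p] F ((2 * B' v (mσ v)) * (γ * σ γ))) := by
      rw [map_mul, map_ofNat, lhs1, expand, Finset.mul_sum]
      rw [CMGaugeAux.trace_eq_sum ℚ_[p] F Ft hcard]
      refine Finset.sum_congr rfl (fun τ _ => ?_)
      rw [map_mul, map_mul, map_mul, map_ofNat, hτB τ]
      ring
    have h2 := hKinjF key
    rw [← h2]
    ring

end
end
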